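/- The 5-dimensional nilpotent commutative associative algebra A₀₃ degenerates to A₀₄: the structure λ of A₀₄ lies in the closure of the GL(5,ℂ)-orbit O(μ) of the structure μ of A₀₃ (closure in the standard topology on the space of bilinear maps ℂ⁵ × ℂ⁵ → ℂ⁵). -/
import Mathlib

set_option maxHeartbeats 2000000
set_option synthInstance.maxHeartbeats 400000

open ContinuousLinearMap

/-- The underlying space `ℂⁿ`. -/
abbrev Vn (n : ℕ) := Fin n → ℂ

/-- The space of bilinear maps `ℂⁿ × ℂⁿ → ℂⁿ` (as continuous linear maps in two
arguments), carrying its standard topology as a finite-dimensional complex vector space. -/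
abbrev Bil (n : ℕ) := Vn n →L[ℂ] Vn n →L[ℂ] Vn n

/-- The action of `GL(n, ℂ)` on bilinear maps: `(g · μ)(x, y) = g (μ (g⁻¹ x) (g⁻¹ y))`. -/
noncomputable def act {n : ℕ} (g : Vn n ≃L[ℂ] Vn n) (μ : Bil n) : Bil n :=
  ((compL ℂ (Vn n) (Vn n) (Vn n)).flip (g.symm : Vn n →L[ℂ] Vn n)).comp
    (((compL ℂ (Vn n) (Vn n) (Vn n)) (g : Vn n →L[ℂ] Vn n)).comp
      (μ.comp (g.symm : Vn n →L[ℂ] Vn n)))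

@[simp] lemma act_apply {n : ℕ} (g : Vn n ≃L[ℂ] Vn n) (μ : Bil n) (x y : Vn n) :
    act g μ x y = g (μ (g.symm x) (g.symm y)) := rfl

/-- The orbit `O(μ)` of a bilinear map under the `GL(n, ℂ)`-action. -/
noncomputable def orbit {n : ℕ} (μ : Bil n) : Set (Bil n) :=
  {ν | ∃ g : Vn n ≃L[ℂ] Vn n, ν = act g μ}

/-- The standard basis `e₁, …, e₅` of `ℂ⁵` (zero-indexed: `e i` is `e_{i+1}`). -/
def e (i : Fin 5) : Vn 5 := Pi.single i 1

/-- Multiplication table of the algebra `𝐀03` (entry `(i, j)` is `eᵢ · eⱼ`). -/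
def tblA03 : Fin 5 → Fin 5 → Vn 5 :=
  ![![e 2, 0, e 4, 0, 0],
   ![0, e 3, 0, e 4, 0],
   ![e 4, 0, 0, 0, 0],
   ![0, e 4, 0, 0, 0],
   ![0, 0, 0, 0, 0]]

/-- Multiplication table of the algebra `𝐀04` (entry `(i, j)` is `eᵢ · eⱼ`). -/
def tblA04 : Fin 5 → Fin 5 → Vn 5 :=
  ![![e 2, e 3, 0, e 4, 0],
   ![e 3, 0, e 4, 0, 0],
   ![0, e 4, 0, 0, 0],
   ![e 4, 0, 0, 0, 0],
   ![0, 0, 0, 0, 0]]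

/-! ### Auxiliary development

We use the parametrized basis change `E₁ = e₁ - e₂`, `E₂ = t (e₁ + e₂)`, `E₃ = e₃ + e₄`,
`E₄ = t (e₃ - e₄)`, `E₅ = 2t e₅`.  In this basis the multiplication of `𝐀03` has the
table of `𝐀04` up to a single term `E₂ · E₂ = t² E₃` which tends to `0` as `t → 0`. -/

/-- The map sending the standard basis to the deformed basis `Eᵢ` (this is `g⁻¹`). -/
def Pf (t : ℂ) : Vn 5 → Vn 5 := fun x =>
  ![x 0 + t * x 1, -x 0 + t * x 1, x 2 + t * x 3, x 2 - t * x 3, 2 * t * x 4]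

/-- The inverse of `Pf t` (for `t ≠ 0`). -/
noncomputable def Qf (t : ℂ) : Vn 5 → Vn 5 := fun y =>
  ![(y 0 - y 1) / 2, (y 0 + y 1) / (2 * t), (y 2 + y 3) / 2, (y 2 - y 3) / (2 * t), y 4 / (2 * t)]

/-- The linear equivalence with `toFun = Qf t` and `invFun = Pf t`. -/
noncomputable def phiL (t : ℂ) (ht : t ≠ 0) : Vn 5 ≃ₗ[ℂ] Vn 5 where
  toFun := Qf t
  invFun := Pf t
  map_add' := by
    intro x y; funext k
    fin_cases k <;>
      simp [Qf, show ((⟨2, by omega⟩ : Fin 5)) = 2 from rfl,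
        show ((⟨3, by omega⟩ : Fin 5)) = 3 from rfl,
        show ((⟨4, by omega⟩ : Fin 5)) = 4 from rfl] <;> ring
  map_smul' := by
    intro c x; funext k
    fin_cases k <;>
      simp [Qf, show ((⟨2, by omega⟩ : Fin 5)) = 2 from rfl,
        show ((⟨3, by omega⟩ : Fin 5)) = 3 from rfl,
        show ((⟨4, by omega⟩ : Fin 5)) = 4 from rfl] <;> ring
  left_inv := by
    intro y; funext k
    fin_cases k <;>
      simp [Qf, Pf, show ((⟨2, by omega⟩ : Fin 5)) = 2 from rfl,
        show ((⟨3, by omega⟩ : Fin 5)) = 3 from rfl,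
        show ((⟨4, by omega⟩ : Fin 5)) = 4 from rfl] <;> field_simp <;> ring
  right_inv := by
    intro y; funext k
    fin_cases k <;>
      simp [Qf, Pf, show ((⟨2, by omega⟩ : Fin 5)) = 2 from rfl,
        show ((⟨3, by omega⟩ : Fin 5)) = 3 from rfl,
        show ((⟨4, by omega⟩ : Fin 5)) = 4 from rfl] <;> field_simp <;> ring

/-- The continuous linear equivalence `g(t)` used in the degeneration. -/
noncomputable def phi (t : ℂ) (ht : t ≠ 0) : Vn 5 ≃L[ℂ] Vn 5 :=
  (phiL t ht).toContinuousLinearEquiv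

lemma phi_symm_apply (t : ℂ) (ht : t ≠ 0) (x : Vn 5) : (phi t ht).symm x = Pf t x := rfl
lemma phi_apply (t : ℂ) (ht : t ≠ 0) (x : Vn 5) : (phi t ht) x = Qf t x := rfl

/-- Expansion of a bilinear map over the standard basis. -/
lemma bil_eq (B : Bil 5) (x y : Vn 5) :
    B x y = ∑ i, ∑ j, (x i * y j) • B (e i) (e j) := by
  have hx : ∀ z : Vn 5, z = ∑ i, z i • e i := by
    intro z; funext j
    simp [e, Finset.sum_apply, Pi.single_apply]
  conv_lhs => rw [hx x, hx y]
  simp only [map_sum, map_smul, ContinuousLinearMap.sum_apply,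
    ContinuousLinearMap.smul_apply, Finset.smul_sum, smul_smul]
  rw [Finset.sum_comm]
  simp [mul_comm]

/-- Two bilinear maps agreeing on the standard basis agree. -/
lemma bil_ext {B C : Bil 5} (h : ∀ i j, B (e i) (e j) = C (e i) (e j)) : B = C := by
  ext x y
  rw [bil_eq B, bil_eq C]
  simp [h]

/-- The "error" bilinear map: `ν(x, y) = x₂ y₂ • e₃`. -/
noncomputable def nuBil : Bil 5 :=
  (ContinuousLinearMap.proj (R := ℂ) (φ := fun _ : Fin 5 => ℂ) 1).smulRight
    ((ContinuousLinearMap.proj (R := ℂ) (φ := fun _ : Fin 5 => ℂ) 1).smulRight (e 2))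

lemma nuBil_apply (x y : Vn 5) : nuBil x y = (x 1 * y 1) • e 2 := by
  simp [nuBil, smul_smul]

/-- The key identity: acting on the structure of `𝐀03` by `g(t)` gives exactly the
structure of `𝐀04` plus `t² ν`. -/
lemma act_phi_eq (μ lam : Bil 5)
    (hμ : ∀ i j : Fin 5, μ (e i) (e j) = tblA03 i j)
    (hlam : ∀ i j : Fin 5, lam (e i) (e j) = tblA04 i j)
    (t : ℂ) (ht : t ≠ 0) :
    act (phi t ht) μ = lam + (t * t) • nuBil := by
  apply bil_ext
  intro i j
  rw [act_apply, phi_symm_apply, phi_symm_apply, phi_apply]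
  have hQP : ∀ z, Qf t (Pf t z) = z := (phiL t ht).right_inv
  have hmain : μ (Pf t (e i)) (Pf t (e j))
      = Pf t ((lam + (t * t) • nuBil) (e i) (e j)) := by
    rw [bil_eq μ]
    simp only [hμ, ContinuousLinearMap.add_apply, ContinuousLinearMap.smul_apply, hlam,
      nuBil_apply]
    fin_cases i <;> fin_cases j <;> (funext k; fin_cases k) <;>
      simp [Pf, e, tblA03, tblA04, Fin.sum_univ_five, Pi.single_apply,
        Matrix.vecHead, Matrix.vecTail,
        show ((⟨0, by omega⟩ : Fin 5)) = 0 from rfl,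
        show ((⟨1, by omega⟩ : Fin 5)) = 1 from rfl,
        show ((⟨2, by omega⟩ : Fin 5)) = 2 from rfl,
        show ((⟨3, by omega⟩ : Fin 5)) = 3 from rfl,
        show ((⟨4, by omega⟩ : Fin 5)) = 4 from rfl] <;> ring
  rw [hmain, hQP]

/-- The $5$-dimensional nilpotent commutative associative algebra `𝐀03` degenerates to
`𝐀04`: the structure `λ` of `𝐀04` lies in the closure of
the `GL(5, ℂ)`-orbit `O(μ)` of the structure `μ` of `𝐀03`. -/
theorem A03_deg_A04 (μ lam : Bil 5)
    (hμ : ∀ i j : Fin 5, μ (e i) (e j) = tblA03 i j)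
    (hlam : ∀ i j : Fin 5, lam (e i) (e j) = tblA04 i j) :
    lam ∈ closure (orbit μ) := by
  -- the sequence of parameters `tₙ = 1/(n+1)` (as complex numbers)
  set c : ℕ → ℂ := fun n => ((1 / (n + 1 : ℝ) : ℝ) : ℂ) with hc
  have hcne : ∀ n, c n ≠ 0 := by
    intro n
    simp only [hc, Complex.ofReal_ne_zero]
    positivity
  -- the sequence of deformed structures
  have hc0 : Filter.Tendsto c Filter.atTop (nhds 0) := by
    have h1 : Filter.Tendsto (fun n : ℕ => (1 / (n + 1 : ℝ) : ℝ)) Filter.atTop (nhds 0) :=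
      tendsto_one_div_add_atTop_nhds_zero_nat
    have := (Complex.continuous_ofReal.tendsto (0 : ℝ)).comp h1
    simpa [hc, Function.comp_def] using this
  have htend : Filter.Tendsto (fun n => lam + (c n * c n) • nuBil) Filter.atTop (nhds lam) := by
    have h0 : Filter.Tendsto (fun n => (c n * c n) • nuBil) Filter.atTop (nhds (0 : Bil 5)) := by
      have h := (hc0.mul hc0).smul_const nuBil
      have he : ((0 : ℂ) * 0) • nuBil = (0 : Bil 5) := by ext x y; simp
      rwa [he] at h
    have h1 := ((Homeomorph.addLeft lam).continuous.tendsto 0).comp h0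
    have he2 : lam + (0 : Bil 5) = lam := by ext x y; simp
    simpa [Function.comp_def, he2] using h1
  refine mem_closure_of_tendsto htend (Filter.Eventually.of_forall fun n => ?_)
  rw [← act_phi_eq μ lam hμ hlam (c n) (hcne n)]
  exact ⟨phi (c n) (hcne n), rfl⟩
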